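/- Let (D_k) be a sequence of downward-closed subsets of ℕ^d with D_{k+1} ⊆ D_k for all k. If D_{k+1} = D_k for some k defined via U_k = upward closure of χ(T(Δ^{≤k})) ∪ V₀ and D_k = ℕ^d \ U_k, then T(Δ^*) = T(Δ^{≤k}): that is, once the chain stabilizes at step k, the set of transfer flows of all transition sequences is already captured by sequences of length at most k. -/

import Mathlib

/-- ℕ extended with an extra element `#` (represented by `none`),
which is an identity for addition and incomparable with integers. -/
abbrev NS := Option ℕ

def NS.sharp : NS := none

def NS.add : NS → NS → NS
  | none, x => x
  | some a, none => some a
  | some a, some b => some (a + b)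

instance : Add NS := ⟨NS.add⟩
instance : Zero NS := ⟨none⟩

instance : AddCommMonoid NS where
  add_assoc a b c := by
    show NS.add (NS.add a b) c = NS.add a (NS.add b c)
    cases a <;> cases b <;> cases c <;> simp [NS.add, Nat.add_assoc]
  zero_add a := by cases a <;> rfl
  add_zero a := by cases a <;> rfl
  add_comm a b := by
    show NS.add a b = NS.add b a
    cases a <;> cases b <;> simp [NS.add, Nat.add_comm]
  nsmul := nsmulRec

/-- The order on `NS`: `#` is only comparable with `#`. -/
def NS.le : NS → NS → Prop
  | none, none => True
  | some a, some b => a ≤ b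
  | _, _ => False

def NS.lt (x y : NS) : Prop := NS.le x y ∧ x ≠ y

/-- A transfer flow: an agent part `f` and a control part `(src, dst)`. -/
structure TF (Q L : Type) where
  f : Q → Q → NS
  src : L
  dst : L

/-- The order `⪯` on transfer flows. -/
def TF.le {Q L : Type} (t1 t2 : TF Q L) : Prop :=
  t1.src = t2.src ∧ t1.dst = t2.dst ∧ ∀ q q', NS.le (t1.f q q') (t2.f q q')

/-- The product `tf1 ⊗ tf2` of two transfer flows. -/
def TF.prod {Q L : Type} [Fintype Q] (t1 t2 : TF Q L) : Set (TF Q L) :=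
  { t | t1.dst = t2.src ∧ t.src = t1.src ∧ t.dst = t2.dst ∧
    ∃ H : Q → Q → Q → NS,
      (∀ q1 q3, (∑ q2, H q1 q2 q3) = t.f q1 q3) ∧
      (∀ q1 q2, NS.le (t1.f q1 q2) (∑ q3, H q1 q2 q3)) ∧
      (∀ q2 q3, NS.le (t2.f q2 q3) (∑ q1, H q1 q2 q3)) }

/-- The weight of a transfer flow: `#` contributes nothing. -/
def TF.weight {Q L : Type} [Fintype Q] (t : TF Q L) : ℕ :=
  ∑ q, ∑ q', (t.f q q').getD 0

/-- Minimality with respect to `⪯` within a set of transfer flows. -/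
def MinimalIn {Q L : Type} (S : Set (TF Q L)) (t : TF Q L) : Prop :=
  t ∈ S ∧ ∀ t' ∈ S, TF.le t' t → t' = t
/-- An immediate observation transition `(q1, q2) → (q1, q3)`, written
`q2 --q1--> q3`: an agent in `src` observes an agent in `obs` and moves
to `dst`. -/
structure IOTrans (Q : Type) where
  obs : Q
  src : Q
  dst : Q

/-- One step of the protocol using transition `t = (q1,q2) → (q1,q3)`:
one agent moves from `t.src` to `t.dst` while observing an agent in `t.obs`. -/
def ProtStep {Q : Type} [DecidableEq Q] (t : IOTrans Q) (γ γ' : Q → ℕ) : Prop :=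
  1 ≤ γ t.obs ∧ 1 ≤ γ t.src ∧ (t.obs = t.src → 2 ≤ γ t.obs) ∧
  ∀ q, γ' q = γ q - (if q = t.src then 1 else 0) + (if q = t.dst then 1 else 0)

/-- `c1 →tf c2`: a step from configuration `c1` to `c2` following a
transfer flow `tf`, via a step witness `g ≥ f`. -/
def FlowStep {Q L : Type} [Fintype Q] (tf : TF Q L) (c1 c2 : (Q → ℕ) × L) : Prop :=
  c1.2 = tf.src ∧ c2.2 = tf.dst ∧
  ∃ g : Q → Q → NS,
    (∀ q q', NS.le (tf.f q q') (g q q')) ∧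
    (∀ q, (some (c1.1 q) : NS) = ∑ q', g q q') ∧
    (∀ q, (some (c2.1 q) : NS) = ∑ q', g q' q)

/-- The set `T(t)` of transfer flows associated with a transition
`t = (q1,q2) → (q1,q3)` of the IOPP, where `Tr` is the transition function of
the deterministic Rabin automaton. -/
def Tset {Q L : Type} [DecidableEq Q] (Tr : L → IOTrans Q → L) (t : IOTrans Q) :
    Set (TF Q L) :=
  { tf | Tr tf.src t = tf.dst ∧
    ((t.obs ≠ t.src ∨ t.obs ≠ t.dst) →
      NS.le (some 1) (tf.f t.obs t.obs) ∧ NS.le (some 1) (tf.f t.src t.dst)) ∧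
    ((t.obs = t.src ∧ t.obs = t.dst) → NS.le (some 2) (tf.f t.obs t.obs)) ∧
    (∀ q, q ≠ t.obs → (q, q) ≠ (t.src, t.dst) → NS.le (some 0) (tf.f q q)) ∧
    (∀ q q', q ≠ q' → (q, q') ≠ (t.src, t.dst) → tf.f q q' = NS.sharp) }

/-- The product extended to sets of transfer flows. -/
def setProd {Q L : Type} [Fintype Q] (F F' : Set (TF Q L)) : Set (TF Q L) :=
  ⋃ t1 ∈ F, ⋃ t2 ∈ F', TF.prod t1 t2

/-- `T(ε)`: transfer flows of the empty sequence. -/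
def Teps {Q L : Type} : Set (TF Q L) :=
  { tf | tf.src = tf.dst ∧ (∀ q, tf.f q q ≠ NS.sharp) ∧
    ∀ q q', q ≠ q' → tf.f q q' = NS.sharp }

/-- `T(w)` for a word `w = t1 … tk`: the product `T(t1) ⊗ … ⊗ T(tk)`. -/
def Tword {Q L : Type} [Fintype Q] [DecidableEq Q] (Tr : L → IOTrans Q → L) :
    List (IOTrans Q) → Set (TF Q L)
  | [] => Teps
  | t :: w => setProd (Tset Tr t) (Tword Tr w)

/-- `T(Δ^{≤k})`: transfer flows of sequences of at most `k` transitions. -/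
def TBounded {Q L : Type} [Fintype Q] [DecidableEq Q] (Tr : L → IOTrans Q → L)
    (k : ℕ) : Set (TF Q L) :=
  ⋃ w ∈ { w : List (IOTrans Q) | w.length ≤ k }, Tword Tr w

/-- `T(Δ^*)`: transfer flows of all finite sequences of transitions. -/
def TStar {Q L : Type} [Fintype Q] [DecidableEq Q] (Tr : L → IOTrans Q → L) :
    Set (TF Q L) :=
  ⋃ w : List (IOTrans Q), Tword Tr w

/-- Vectors of `ℕ^d` with `d = |Q|² + 2`: one coordinate per pair of states,
plus two extra coordinates. -/
abbrev Vec (Q : Type) := ((Q × Q) ⊕ Fin 2) → ℕ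

/-- `N = |L|² · 2^{|Q|²}`. -/
def Ncard (Q L : Type) [Fintype Q] [Fintype L] : ℕ :=
  (Fintype.card L) ^ 2 * 2 ^ ((Fintype.card Q) ^ 2)

/-- The set `S` of `#`-positions of an agent part. -/
def sharpPos {Q : Type} (f : Q → Q → NS) : Q → Q → Bool :=
  fun q q' => (f q q').isNone

/-- The encoding `χ` of a transfer flow into sets of vectors of `ℕ^d`, given a
map `θ` from pairs of control locations and `#`-position sets to `{1,…,N}`:
coordinates at pairs `(q,q')` with `f(q,q') ≠ #` carry `f(q,q')`, the other
such coordinates are unconstrained, and the two last coordinates are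
`θ(ℓ,ℓ',S)` and `N + 1 − θ(ℓ,ℓ',S)`. -/
def chi {Q L : Type} (N : ℕ) (θ : L × L × (Q → Q → Bool) → ℕ) (tf : TF Q L) :
    Set (Vec Q) :=
  { v | (∀ q q' n, tf.f q q' = some n → v (Sum.inl (q, q')) = n) ∧
    v (Sum.inr 0) = θ (tf.src, tf.dst, sharpPos tf.f) ∧
    v (Sum.inr 1) = N + 1 - θ (tf.src, tf.dst, sharpPos tf.f) }

/-- The image of a set of transfer flows under the encoding `χ`. -/
def chiSet {Q L : Type} (N : ℕ) (θ : L × L × (Q → Q → Bool) → ℕ)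
    (F : Set (TF Q L)) : Set (Vec Q) :=
  ⋃ tf ∈ F, chi N θ tf

/-- `V₀`: vectors whose last two components are `(N+1, 0)` or `(0, N+1)`. -/
def V0 {Q : Type} (N : ℕ) : Set (Vec Q) :=
  { v | (v (Sum.inr 0) = N + 1 ∧ v (Sum.inr 1) = 0) ∨
        (v (Sum.inr 0) = 0 ∧ v (Sum.inr 1) = N + 1) }

/-- Upward closure with respect to the componentwise order on `ℕ^d`. -/
def upClosure {Q : Type} (A : Set (Vec Q)) : Set (Vec Q) :=
  { v | ∃ u ∈ A, ∀ i, u i ≤ v i }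

/-- `U_k`: the upward closure of `χ(T(Δ^{≤k})) ∪ V₀`. -/
def Uset {Q L : Type} [Fintype Q] [DecidableEq Q] (N : ℕ)
    (θ : L × L × (Q → Q → Bool) → ℕ) (Tr : L → IOTrans Q → L) (k : ℕ) :
    Set (Vec Q) :=
  upClosure (chiSet N θ (TBounded Tr k) ∪ V0 N)

/-- `D_k := ℕ^d \ U_k`. -/
def Dset {Q L : Type} [Fintype Q] [DecidableEq Q] (N : ℕ)
    (θ : L × L × (Q → Q → Bool) → ℕ) (Tr : L → IOTrans Q → L) (k : ℕ) :
    Set (Vec Q) :=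
  (Uset N θ Tr k)ᶜ

section AuxLemmas

lemma NS.le_refl' (a : NS) : NS.le a a := by cases a <;> simp [NS.le]

lemma NS.le_trans' {a b c : NS} (h1 : NS.le a b) (h2 : NS.le b c) : NS.le a c := by
  cases a <;> cases b <;> cases c <;> simp_all [NS.le] <;> omega

lemma NS.none_le' {a : NS} (h : NS.le none a) : a = none := by
  cases a <;> simp_all [NS.le]

lemma NS.add_le_add' {a b c d : NS} (h1 : NS.le a b) (h2 : NS.le c d) :
    NS.le (a + c) (b + d) := by
  show NS.le (NS.add a c) (NS.add b d)
  cases a <;> cases b <;> cases c <;> cases d <;> simp_all [NS.le, NS.add] <;> omega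

lemma NS.le_add_right' (a d : NS) (h : a = none → d = none) : NS.le a (a + d) := by
  show NS.le a (NS.add a d)
  cases a <;> cases d <;> simp_all [NS.le, NS.add]

lemma NS.sum_le_sum' {ι : Type*} (s : Finset ι) (f g : ι → NS)
    (h : ∀ i ∈ s, NS.le (f i) (g i)) :
    NS.le (∑ i ∈ s, f i) (∑ i ∈ s, g i) := by
  classical
  induction s using Finset.induction_on with
  | empty => simp only [Finset.sum_empty]; exact trivial
  | insert _ _ hx ih =>
    rw [Finset.sum_insert hx, Finset.sum_insert hx]
    exact NS.add_le_add' (h _ (Finset.mem_insert_self _ _))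
      (ih fun i hi => h i (Finset.mem_insert_of_mem hi))

lemma NS.sum_none' {ι : Type*} (s : Finset ι) (f : ι → NS)
    (h : ∀ i ∈ s, f i = none) : (∑ i ∈ s, f i) = none := by
  classical
  induction s using Finset.induction_on with
  | empty => rfl
  | insert _ _ hx ih =>
    rw [Finset.sum_insert hx, h _ (Finset.mem_insert_self _ _),
      ih fun i hi => h i (Finset.mem_insert_of_mem hi)]
    rfl

lemma NS.exists_some' {ι : Type*} (s : Finset ι) (f : ι → NS) {n : ℕ}
    (h : (∑ i ∈ s, f i) = some n) : ∃ i ∈ s, f i ≠ none := by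
  by_contra hc
  push_neg at hc
  rw [NS.sum_none' s f hc] at h
  cases h

lemma Tset_up {Q L : Type} [DecidableEq Q] (Tr : L → IOTrans Q → L) (t : IOTrans Q)
    {tf tf' : TF Q L} (h : tf ∈ Tset Tr t) (hle : TF.le tf tf') : tf' ∈ Tset Tr t := by
  obtain ⟨hs, hd, hf⟩ := hle
  obtain ⟨h1, h2, h3, h4, h5⟩ := h
  refine ⟨by rw [← hs, ← hd]; exact h1, ?_, ?_, ?_, ?_⟩
  · intro hne
    obtain ⟨a, b⟩ := h2 hne
    exact ⟨NS.le_trans' a (hf _ _), NS.le_trans' b (hf _ _)⟩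
  · intro he; exact NS.le_trans' (h3 he) (hf _ _)
  · intro q hq hq2; exact NS.le_trans' (h4 q hq hq2) (hf _ _)
  · intro q q' hq hq2
    have h6 := hf q q'
    rw [h5 q q' hq hq2] at h6
    exact NS.none_le' h6

lemma Teps_up {Q L : Type} {tf tf' : TF Q L} (h : tf ∈ Teps) (hle : TF.le tf tf') :
    tf' ∈ Teps := by
  obtain ⟨hs, hd, hf⟩ := hle
  obtain ⟨h1, h2, h3⟩ := h
  refine ⟨by rw [← hs, ← hd]; exact h1, ?_, ?_⟩
  · intro q hq
    have h6 := hf q q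
    cases hfq : tf.f q q with
    | none => exact h2 q hfq
    | some n => rw [hfq, hq] at h6; simp [NS.le, NS.sharp] at h6
  · intro q q' hne
    have h6 := hf q q'
    rw [h3 q q' hne] at h6
    exact NS.none_le' h6

lemma TF_prod_up {Q L : Type} [Fintype Q] {t1 t2 t t' : TF Q L}
    (h : t ∈ TF.prod t1 t2) (hle : TF.le t t') : t' ∈ TF.prod t1 t2 := by
  classical
  obtain ⟨hs, hd, hf⟩ := hle
  obtain ⟨h12, hsrc, hdst, H, hsum, hb1, hb2⟩ := h
  refine ⟨h12, by rw [← hs]; exact hsrc, by rw [← hd]; exact hdst, ?_⟩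
  set dfun : Q → Q → NS := fun q1 q3 =>
    match t.f q1 q3, t'.f q1 q3 with
    | some n, some m => some (m - n)
    | _, _ => none with hdfun
  have factA : ∀ q1 q3, t.f q1 q3 + dfun q1 q3 = t'.f q1 q3 := by
    intro q1 q3
    have h6 := hf q1 q3
    cases e1 : t.f q1 q3 <;> cases e2 : t'.f q1 q3 <;> rw [e1, e2] at h6
    · show NS.add _ _ = _; simp [dfun, e1, e2, NS.add]
    · exact absurd h6 (by simp [NS.le])
    · exact absurd h6 (by simp [NS.le])
    · simp only [NS.le] at h6
      show NS.add _ _ = _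
      simp only [dfun, e1, e2, NS.add]
      congr 1
      omega
  have factSharp : ∀ q1 q3, t.f q1 q3 = none → dfun q1 q3 = none := by
    intro q1 q3 e; simp [dfun, e]
  set H' : Q → Q → Q → NS := fun q1 q2 q3 =>
    if hh : ∃ q2', H q1 q2' q3 ≠ none then
      (if q2 = hh.choose then H q1 q2 q3 + dfun q1 q3 else H q1 q2 q3)
    else H q1 q2 q3 with hH'
  have hpoint : ∀ q1 q2 q3, NS.le (H q1 q2 q3) (H' q1 q2 q3) := by
    intro q1 q2 q3
    simp only [H']
    split
    · rename_i hh
      split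
      · rename_i hq2
        subst hq2
        exact NS.le_add_right' _ _ (fun hn => absurd hn hh.choose_spec)
      · exact NS.le_refl' _
    · exact NS.le_refl' _
  refine ⟨H', ?_, ?_, ?_⟩
  · intro q1 q3
    by_cases hh : ∃ q2', H q1 q2' q3 ≠ none
    · have hrw : ∀ q2, H' q1 q2 q3 =
          H q1 q2 q3 + (if q2 = hh.choose then dfun q1 q3 else 0) := by
        intro q2
        simp only [H', dif_pos hh]
        split
        · rfl
        · exact (add_zero _).symm
      calc (∑ q2, H' q1 q2 q3)
          = (∑ q2, (H q1 q2 q3 + if q2 = hh.choose then dfun q1 q3 else 0)) := by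
            exact Finset.sum_congr rfl fun q2 _ => hrw q2
        _ = (∑ q2, H q1 q2 q3) + (∑ q2, if q2 = hh.choose then dfun q1 q3 else 0) :=
            Finset.sum_add_distrib
        _ = t.f q1 q3 + dfun q1 q3 := by
            rw [hsum q1 q3, Finset.sum_ite_eq' Finset.univ hh.choose
              (fun _ => dfun q1 q3), if_pos (Finset.mem_univ _)]
        _ = t'.f q1 q3 := factA q1 q3
    · push_neg at hh
      have hnone : t.f q1 q3 = none := by
        rw [← hsum q1 q3]
        exact NS.sum_none' _ _ fun i _ => hh i
      have h6 := hf q1 q3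
      rw [hnone] at h6
      have hnone' := NS.none_le' h6
      have : ∀ q2, H' q1 q2 q3 = H q1 q2 q3 := by
        intro q2
        simp only [H']
        rw [dif_neg]
        push_neg
        exact hh
      rw [Finset.sum_congr rfl fun q2 _ => this q2, hsum q1 q3, hnone, hnone']
  · intro q1 q2
    exact NS.le_trans' (hb1 q1 q2)
      (NS.sum_le_sum' _ _ _ fun q3 _ => hpoint q1 q2 q3)
  · intro q2 q3
    exact NS.le_trans' (hb2 q2 q3)
      (NS.sum_le_sum' _ _ _ fun q1 _ => hpoint q1 q2 q3)

lemma Tword_up {Q L : Type} [Fintype Q] [DecidableEq Q] (Tr : L → IOTrans Q → L)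
    (w : List (IOTrans Q)) {tf tf' : TF Q L} (h : tf ∈ Tword Tr w)
    (hle : TF.le tf tf') : tf' ∈ Tword Tr w := by
  induction w with
  | nil => exact Teps_up h hle
  | cons t w ih =>
    simp only [Tword, setProd, Set.mem_iUnion] at h ⊢
    obtain ⟨t1, ht1, t2, ht2, hp⟩ := h
    exact ⟨t1, ht1, t2, ht2, TF_prod_up hp hle⟩

lemma mem_TBounded_iff {Q L : Type} [Fintype Q] [DecidableEq Q]
    (Tr : L → IOTrans Q → L) (k : ℕ) (tf : TF Q L) :
    tf ∈ TBounded Tr k ↔ ∃ w : List (IOTrans Q), w.length ≤ k ∧ tf ∈ Tword Tr w := by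
  simp [TBounded]

end AuxLemmas

/-- If the descending chain `(D_k)` stabilizes at step `k`, i.e.
`D_{k+1} = D_k`, then `T(Δ^*) = T(Δ^{≤k})`: the transfer flows of all
transition sequences are already captured by sequences of length at most `k`. -/
theorem TStar_eq_of_Dset_stabilizes {Q L : Type} [Fintype Q] [Fintype L]
    [DecidableEq Q]
    (θ : L × L × (Q → Q → Bool) → ℕ)
    (hθ : Set.BijOn θ Set.univ (Set.Icc 1 (Ncard Q L)))
    (Tr : L → IOTrans Q → L) (k : ℕ)
    (hstab : Dset (Ncard Q L) θ Tr (k + 1) = Dset (Ncard Q L) θ Tr k) :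
    TStar Tr = TBounded Tr k := by
  classical
  set N := Ncard Q L with hN
  have hU : Uset N θ Tr (k + 1) = Uset N θ Tr k := by
    have h := congrArg compl hstab
    simpa [Dset, compl_compl] using h
  have hstep : TBounded Tr (k + 1) ⊆ TBounded Tr k := by
    intro tf htf
    set x : L × L × (Q → Q → Bool) := (tf.src, tf.dst, sharpPos tf.f) with hx
    set v : Vec Q := Sum.elim (fun p => (tf.f p.1 p.2).getD 0)
      (fun j => if j = 0 then θ x else N + 1 - θ x) with hv
    have hv0 : v (Sum.inr 0) = θ x := by simp [v]
    have hv1 : v (Sum.inr 1) = N + 1 - θ x := by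
      show (if (1 : Fin 2) = 0 then θ x else N + 1 - θ x) = N + 1 - θ x
      rw [if_neg (by decide)]
    have hvchi : v ∈ chi N θ tf := by
      refine ⟨?_, hv0, hv1⟩
      intro q q' n hn
      simp [v, hn]
    have hvU : v ∈ Uset N θ Tr (k + 1) :=
      ⟨v, Set.mem_union_left _ (Set.mem_biUnion htf hvchi), fun i => le_rfl⟩
    rw [hU] at hvU
    obtain ⟨u, hu, hle⟩ := hvU
    obtain ⟨hθ1, hθ2⟩ := hθ.mapsTo (Set.mem_univ x)
    rcases hu with huchi | hu0
    · -- u encodes some tf2 ∈ T(Δ^{≤k})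
      obtain ⟨tf2, htf2mem, hchi2⟩ := Set.mem_iUnion₂.mp huchi
      obtain ⟨hc1, hc2, hc3⟩ := hchi2
      set x2 : L × L × (Q → Q → Bool) := (tf2.src, tf2.dst, sharpPos tf2.f) with hx2
      obtain ⟨hθ1', hθ2'⟩ := hθ.mapsTo (Set.mem_univ x2)
      have e0 := hle (Sum.inr 0)
      have e1 := hle (Sum.inr 1)
      rw [hc2, hv0] at e0
      rw [hc3, hv1] at e1
      have heq : x2 = x :=
        hθ.injOn (Set.mem_univ _) (Set.mem_univ _) (by omega)
      rw [hx2, hx, Prod.mk.injEq, Prod.mk.injEq] at heq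
      obtain ⟨hsrc, hdst, hS⟩ := heq
      have hlef : TF.le tf2 tf := by
        refine ⟨hsrc, hdst, ?_⟩
        intro q q'
        have hSqq : (tf2.f q q').isNone = (tf.f q q').isNone := by
          have h7 := congrFun (congrFun hS q) q'
          simpa [sharpPos] using h7
        cases h2 : tf.f q q' with
        | none =>
          have h8 : tf2.f q q' = none := by
            rw [h2] at hSqq
            simpa [Option.isNone_iff_eq_none] using hSqq
          rw [h8]
          exact trivial
        | some n =>
          have h8 : ∃ m, tf2.f q q' = some m := by
            rw [h2] at hSqq
            cases h9 : tf2.f q q' with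
            | none => rw [h9] at hSqq; simp at hSqq
            | some m => exact ⟨m, rfl⟩
          obtain ⟨m, hm⟩ := h8
          have hum := hc1 q q' m hm
          have hvle := hle (Sum.inl (q, q'))
          have hvn : v (Sum.inl (q, q')) = n := by simp [v, h2]
          rw [hum, hvn] at hvle
          rw [hm]
          exact hvle
      obtain ⟨w, hwlen, hw⟩ := (mem_TBounded_iff Tr k tf2).mp htf2mem
      exact (mem_TBounded_iff Tr k tf).mpr ⟨w, hwlen, Tword_up Tr w hw hlef⟩
    · -- u ∈ V₀: impossible
      exfalso
      have h0 := hle (Sum.inr 0)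
      have h1 := hle (Sum.inr 1)
      rw [hv0] at h0
      rw [hv1] at h1
      rcases hu0 with ⟨a, _⟩ | ⟨_, b⟩
      · omega
      · omega
  have hmono : ∀ j, TBounded Tr (k + j) ⊆ TBounded Tr k := by
    intro j
    induction j with
    | zero => exact subset_rfl
    | succ j ih =>
      intro tf htf
      obtain ⟨w, hwl, hw⟩ := (mem_TBounded_iff Tr _ tf).mp htf
      cases w with
      | nil => exact (mem_TBounded_iff Tr k tf).mpr ⟨[], by simp, hw⟩
      | cons t w' =>
        simp only [Tword, setProd, Set.mem_iUnion] at hw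
        obtain ⟨t1, ht1, t2, ht2, hp⟩ := hw
        have ht2' : t2 ∈ TBounded Tr k := by
          apply ih
          refine (mem_TBounded_iff Tr _ t2).mpr ⟨w', ?_, ht2⟩
          simp only [List.length_cons] at hwl
          omega
        obtain ⟨w2, hw2l, hw2⟩ := (mem_TBounded_iff Tr k t2).mp ht2'
        apply hstep
        refine (mem_TBounded_iff Tr (k + 1) tf).mpr ⟨t :: w2, by simp; omega, ?_⟩
        simp only [Tword, setProd, Set.mem_iUnion]
        exact ⟨t1, ht1, t2, hw2, hp⟩
  ext tf
  constructor
  · intro h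
    obtain ⟨w, hw⟩ := Set.mem_iUnion.mp h
    exact hmono w.length
      ((mem_TBounded_iff Tr _ tf).mpr ⟨w, by omega, hw⟩)
  · intro h
    obtain ⟨w, _, hw⟩ := (mem_TBounded_iff Tr k tf).mp h
    exact Set.mem_iUnion.mpr ⟨w, hw⟩
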